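/- Let k be a positive integer and a, b ∈ ℝ. Define on ℝ × ℝ³ the vector field u = (u₁,u₂,u₃) with u₁(t,y) = −e^{k t}·sin(k y₁)·( sinh(k y₃) − coth(k)·cosh(k y₃) ), u₂ = 0, and u₃(t,y) = e^{k t}·cos(k y₁)·( cosh(k y₃) − coth(k)·sinh(k y₃) ). Then: (i) ∂_{y₁}u₁ + ∂_{y₂}u₂ + ∂_{y₃}u₃ = 0 everywhere (the field is divergence-free); (ii) u₃(t,y₁,y₂,1) = 0 for all t, y₁, y₂ (rigid-wall condition); (iii) each component u_i satisfies ∂ₜ²u_i + ∂²_{y₁}u_i = ((a²+b²)/2)·∂²_{y₂}u_i everywhere. -/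

import Mathlib

noncomputable section

/-- First component of the growing eigenmode of equation (2.36) (real form). -/
def u₁KH (k : ℕ) (t y₁ _y₂ y₃ : ℝ) : ℝ :=
  -(Real.exp (k * t) * Real.sin (k * y₁)
      * (Real.sinh (k * y₃) - (Real.cosh (k : ℝ) / Real.sinh (k : ℝ)) * Real.cosh (k * y₃)))

/-- Second component of the growing eigenmode of equation (2.36). -/
def u₂KH (_k : ℕ) (_t _y₁ _y₂ _y₃ : ℝ) : ℝ := 0

/-- Third component of the growing eigenmode of equation (2.36) (real form). -/
def u₃KH (k : ℕ) (t y₁ _y₂ y₃ : ℝ) : ℝ :=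
  Real.exp (k * t) * Real.cos (k * y₁)
    * (Real.cosh (k * y₃) - (Real.cosh (k : ℝ) / Real.sinh (k : ℝ)) * Real.sinh (k * y₃))

lemma hd_exp (c x : ℝ) : HasDerivAt (fun z : ℝ => Real.exp (c * z)) (c * Real.exp (c * x)) x := by
  simpa [mul_comm, Function.comp_def] using (Real.hasDerivAt_exp (c * x)).comp x ((hasDerivAt_id x).const_mul c)

lemma hd_sin (c x : ℝ) : HasDerivAt (fun z : ℝ => Real.sin (c * z)) (c * Real.cos (c * x)) x := by
  simpa [mul_comm, Function.comp_def] using (Real.hasDerivAt_sin (c * x)).comp x ((hasDerivAt_id x).const_mul c)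

lemma hd_cos (c x : ℝ) : HasDerivAt (fun z : ℝ => Real.cos (c * z)) (-(c * Real.sin (c * x))) x := by
  simpa [mul_comm, Function.comp_def] using (Real.hasDerivAt_cos (c * x)).comp x ((hasDerivAt_id x).const_mul c)

lemma hd_sinh (c x : ℝ) : HasDerivAt (fun z : ℝ => Real.sinh (c * z)) (c * Real.cosh (c * x)) x := by
  simpa [mul_comm, Function.comp_def] using (Real.hasDerivAt_sinh (c * x)).comp x ((hasDerivAt_id x).const_mul c)

lemma hd_cosh (c x : ℝ) : HasDerivAt (fun z : ℝ => Real.cosh (c * z)) (c * Real.sinh (c * x)) x := by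
  simpa [mul_comm, Function.comp_def] using (Real.hasDerivAt_cosh (c * x)).comp x ((hasDerivAt_id x).const_mul c)

/-- Equation (2.36): the exponentially growing eigenmode
`u = (u₁,0,u₃)` of the linearized Kelvin-Helmholtz problem is divergence-free,
satisfies the rigid-wall condition `u₃ = 0` at `y₃ = 1`, and each component solves
`∂ₜ²uᵢ + ∂²_{y₁}uᵢ = ((a²+b²)/2)·∂²_{y₂}uᵢ`; its growth rate `k` is independent of
the transverse magnetic field strengths `a, b`. -/
theorem stmt_12 (k : ℕ) (hk : 0 < k) (a b : ℝ) :
    -- (i) divergence-free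
    (∀ t y₁ y₂ y₃ : ℝ,
      deriv (fun z => u₁KH k t z y₂ y₃) y₁
        + deriv (fun z => u₂KH k t y₁ z y₃) y₂
        + deriv (fun z => u₃KH k t y₁ y₂ z) y₃ = 0)
    -- (ii) rigid-wall condition
    ∧ (∀ t y₁ y₂ : ℝ, u₃KH k t y₁ y₂ 1 = 0)
    -- (iii) each component solves the interface equation
    ∧ (∀ u ∈ ({u₁KH k, u₂KH k, u₃KH k} : Set (ℝ → ℝ → ℝ → ℝ → ℝ)),
        ∀ t y₁ y₂ y₃ : ℝ,
          deriv (fun s => deriv (fun s' => u s' y₁ y₂ y₃) s) t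
            + deriv (fun z => deriv (fun z' => u t z' y₂ y₃) z) y₁
          = (a ^ 2 + b ^ 2) / 2 * deriv (fun z => deriv (fun z' => u t y₁ z' y₃) z) y₂) := by
  have hks : Real.sinh (k : ℝ) ≠ 0 := by
    have : (0:ℝ) < (k:ℝ) := by exact_mod_cast hk
    exact ne_of_gt (Real.sinh_pos_iff.mpr this)
  set C : ℝ := Real.cosh (k : ℝ) / Real.sinh (k : ℝ) with hC
  refine ⟨?_, ?_, ?_⟩
  · -- divergence free
    intro t y₁ y₂ y₃
    have h1 : HasDerivAt (fun z => u₁KH k t z y₂ y₃)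
        (-(Real.exp ((k:ℝ) * t) * ((k:ℝ) * Real.cos ((k:ℝ) * y₁))
          * (Real.sinh ((k:ℝ) * y₃) - C * Real.cosh ((k:ℝ) * y₃)))) y₁ :=
      (((hd_sin (k:ℝ) y₁).const_mul (Real.exp ((k:ℝ) * t))).mul_const
        (Real.sinh ((k:ℝ) * y₃) - C * Real.cosh ((k:ℝ) * y₃))).neg
    have h2 : deriv (fun z => u₂KH k t y₁ z y₃) y₂ = 0 := by
      simp [u₂KH]
    have h3 : HasDerivAt (fun z => u₃KH k t y₁ y₂ z)
        (Real.exp ((k:ℝ) * t) * Real.cos ((k:ℝ) * y₁)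
          * ((k:ℝ) * Real.sinh ((k:ℝ) * y₃) - C * ((k:ℝ) * Real.cosh ((k:ℝ) * y₃)))) y₃ :=
      ((hd_cosh (k:ℝ) y₃).sub ((hd_sinh (k:ℝ) y₃).const_mul C)).const_mul
        (Real.exp ((k:ℝ) * t) * Real.cos ((k:ℝ) * y₁))
    rw [h1.deriv, h2, h3.deriv]
    ring
  · -- rigid wall
    intro t y₁ y₂
    have h0 : Real.cosh (k:ℝ) - Real.cosh (k:ℝ) / Real.sinh (k:ℝ) * Real.sinh (k:ℝ) = 0 := by
      rw [div_mul_cancel₀ _ hks, sub_self]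
    simp [u₃KH, h0]
  · -- interface equation
    intro u hu t y₁ y₂ y₃
    simp only [Set.mem_insert_iff, Set.mem_singleton_iff] at hu
    rcases hu with rfl | rfl | rfl
    · -- u₁
      have ht : (fun s => deriv (fun s' => u₁KH k s' y₁ y₂ y₃) s)
          = fun s => -((k:ℝ) * Real.exp ((k:ℝ) * s) * Real.sin ((k:ℝ) * y₁)
            * (Real.sinh ((k:ℝ) * y₃) - C * Real.cosh ((k:ℝ) * y₃))) := by
        funext s
        exact ((((hd_exp (k:ℝ) s).mul_const (Real.sin ((k:ℝ) * y₁))).mul_const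
          (Real.sinh ((k:ℝ) * y₃) - C * Real.cosh ((k:ℝ) * y₃))).neg).deriv
      have htt : HasDerivAt (fun s => -((k:ℝ) * Real.exp ((k:ℝ) * s) * Real.sin ((k:ℝ) * y₁)
            * (Real.sinh ((k:ℝ) * y₃) - C * Real.cosh ((k:ℝ) * y₃))))
          (-((k:ℝ) * ((k:ℝ) * Real.exp ((k:ℝ) * t)) * Real.sin ((k:ℝ) * y₁)
            * (Real.sinh ((k:ℝ) * y₃) - C * Real.cosh ((k:ℝ) * y₃)))) t :=
        ((((hd_exp (k:ℝ) t).const_mul (k:ℝ)).mul_const _).mul_const _).neg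
      have hx : (fun z => deriv (fun z' => u₁KH k t z' y₂ y₃) z)
          = fun z => -(Real.exp ((k:ℝ) * t) * ((k:ℝ) * Real.cos ((k:ℝ) * z))
            * (Real.sinh ((k:ℝ) * y₃) - C * Real.cosh ((k:ℝ) * y₃))) := by
        funext z
        exact ((((hd_sin (k:ℝ) z).const_mul (Real.exp ((k:ℝ) * t))).mul_const _).neg).deriv
      have hxx : HasDerivAt (fun z => -(Real.exp ((k:ℝ) * t) * ((k:ℝ) * Real.cos ((k:ℝ) * z))
            * (Real.sinh ((k:ℝ) * y₃) - C * Real.cosh ((k:ℝ) * y₃))))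
          (-(Real.exp ((k:ℝ) * t) * ((k:ℝ) * -((k:ℝ) * Real.sin ((k:ℝ) * y₁)))
            * (Real.sinh ((k:ℝ) * y₃) - C * Real.cosh ((k:ℝ) * y₃)))) y₁ :=
        ((((hd_cos (k:ℝ) y₁).const_mul (k:ℝ)).const_mul (Real.exp ((k:ℝ) * t))).mul_const _).neg
      have hy : (fun z => deriv (fun z' => u₁KH k t y₁ z' y₃) z) = fun _ => (0:ℝ) := by
        funext z
        simp [u₁KH]
      rw [ht, htt.deriv, hx, hxx.deriv, hy, deriv_const]
      ring
    · -- u₂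
      simp [u₂KH]
    · -- u₃
      have ht : (fun s => deriv (fun s' => u₃KH k s' y₁ y₂ y₃) s)
          = fun s => (k:ℝ) * Real.exp ((k:ℝ) * s) * Real.cos ((k:ℝ) * y₁)
            * (Real.cosh ((k:ℝ) * y₃) - C * Real.sinh ((k:ℝ) * y₃)) := by
        funext s
        exact (((hd_exp (k:ℝ) s).mul_const (Real.cos ((k:ℝ) * y₁))).mul_const
          (Real.cosh ((k:ℝ) * y₃) - C * Real.sinh ((k:ℝ) * y₃))).deriv
      have htt : HasDerivAt (fun s => (k:ℝ) * Real.exp ((k:ℝ) * s) * Real.cos ((k:ℝ) * y₁)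
            * (Real.cosh ((k:ℝ) * y₃) - C * Real.sinh ((k:ℝ) * y₃)))
          ((k:ℝ) * ((k:ℝ) * Real.exp ((k:ℝ) * t)) * Real.cos ((k:ℝ) * y₁)
            * (Real.cosh ((k:ℝ) * y₃) - C * Real.sinh ((k:ℝ) * y₃))) t :=
        (((hd_exp (k:ℝ) t).const_mul (k:ℝ)).mul_const _).mul_const _
      have hx : (fun z => deriv (fun z' => u₃KH k t z' y₂ y₃) z)
          = fun z => Real.exp ((k:ℝ) * t) * -((k:ℝ) * Real.sin ((k:ℝ) * z))
            * (Real.cosh ((k:ℝ) * y₃) - C * Real.sinh ((k:ℝ) * y₃)) := by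
        funext z
        have : HasDerivAt (fun z' => Real.exp ((k:ℝ) * t) * Real.cos ((k:ℝ) * z')
              * (Real.cosh ((k:ℝ) * y₃) - C * Real.sinh ((k:ℝ) * y₃)))
            (Real.exp ((k:ℝ) * t) * -((k:ℝ) * Real.sin ((k:ℝ) * z))
              * (Real.cosh ((k:ℝ) * y₃) - C * Real.sinh ((k:ℝ) * y₃))) z :=
          (((hd_cos (k:ℝ) z).const_mul (Real.exp ((k:ℝ) * t))).mul_const _)
        exact this.deriv
      have hxx : HasDerivAt (fun z => Real.exp ((k:ℝ) * t) * -((k:ℝ) * Real.sin ((k:ℝ) * z))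
            * (Real.cosh ((k:ℝ) * y₃) - C * Real.sinh ((k:ℝ) * y₃)))
          (Real.exp ((k:ℝ) * t) * -((k:ℝ) * ((k:ℝ) * Real.cos ((k:ℝ) * y₁)))
            * (Real.cosh ((k:ℝ) * y₃) - C * Real.sinh ((k:ℝ) * y₃))) y₁ :=
        (((((hd_sin (k:ℝ) y₁).const_mul (k:ℝ)).neg).const_mul (Real.exp ((k:ℝ) * t))).mul_const _)
      have hy : (fun z => deriv (fun z' => u₃KH k t y₁ z' y₃) z) = fun _ => (0:ℝ) := by
        funext z
        simp [u₃KH]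
      rw [ht, htt.deriv, hx, hxx.deriv, hy, deriv_const]
      ring
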